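/- The E-closure operator satisfies the exchange property: if T₁ ∈ Cl_E(𝒯 ∪ {T₂}) \ Cl_E(𝒯), then T₂ ∈ Cl_E(𝒯 ∪ {T₁}). -/
import Mathlib


open FirstOrder

/-- The E-closure of a family of theories: the family itself together with all
maximal (complete) theories each of whose sentences belongs to infinitely many
members of the family (Proposition 2.2 of the paper). -/
def ClE {L : Language} (𝒯 : Set L.Theory) : Set L.Theory :=
  𝒯 ∪ {T | T.IsMaximal ∧ ∀ φ ∈ T, {T' ∈ 𝒯 | φ ∈ T'}.Infinite}

/-- Corollary 2.4 (Exchange property). -/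
theorem ClE_exchange {L : Language} (𝒯 : Set L.Theory) (T₁ T₂ : L.Theory)
    (h : ∀ T ∈ 𝒯, T.IsMaximal) (h₁ : T₁.IsMaximal) (h₂ : T₂.IsMaximal)
    (hmem : T₁ ∈ ClE (𝒯 ∪ {T₂}) \ ClE 𝒯) :
    T₂ ∈ ClE (𝒯 ∪ {T₁}) := by
  obtain ⟨hin, hout⟩ := hmem
  have hT1 : T₁ = T₂ := by
    rcases hin with hin | ⟨_, hlim⟩
    · rcases hin with hin | hin
      · exact absurd (Or.inl hin) hout
      · exact hin
    · exfalso
      apply hout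
      right
      refine ⟨h₁, fun φ hφ => ?_⟩
      have := hlim φ hφ
      have hsub : {T' ∈ 𝒯 ∪ {T₂} | φ ∈ T'} ⊆ {T' ∈ 𝒯 | φ ∈ T'} ∪ {T₂} := by
        rintro T' ⟨hT' | hT', hφ'⟩
        · exact Or.inl ⟨hT', hφ'⟩
        · exact Or.inr hT'
      have hinf := ((this.mono hsub).diff (Set.finite_singleton T₂)).mono
        (by intro x hx; rcases hx with ⟨hx | hx, hne⟩ <;> [exact hx; exact absurd hx hne])
      exact hinf
  subst hT1
  exact Or.inl (Or.inr rfl)
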